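/- Let Y be a real-valued random variable with Gaussian distribution of mean m and standard deviation s > 0, and let T be a real number (the current best observed value). Then the expected improvement E[max(0, T − Y)] equals (T − m)·Φ((T − m)/s) + s·φ((T − m)/s), where φ and Φ denote the probability density function and the cumulative distribution function of the standard normal distribution. -/

import Mathlib

open MeasureTheory ProbabilityTheory Real
open scoped ENNReal NNReal

/-- The standard normal probability density function. -/
noncomputable def stdNormalPDF (z : ℝ) : ℝ :=
  (1 / Real.sqrt (2 * Real.pi)) * Real.exp (-z ^ 2 / 2)

/-- The standard normal cumulative distribution function. -/
noncomputable def stdNormalCDF (z : ℝ) : ℝ :=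
  ∫ t in Set.Iic z, stdNormalPDF t

lemma integrable_stdNormalPDF : Integrable stdNormalPDF := by
  have h : Integrable (fun z : ℝ => Real.exp (-(1/2 : ℝ) * z ^ 2)) :=
    integrable_exp_neg_mul_sq (by norm_num)
  refine (h.const_mul (1 / Real.sqrt (2 * Real.pi))).congr ?_
  filter_upwards with z
  unfold stdNormalPDF
  congr 1
  ring_nf

lemma integrable_mul_stdNormalPDF : Integrable (fun z : ℝ => z * stdNormalPDF z) := by
  have h : Integrable (fun z : ℝ => z * Real.exp (-(1/2 : ℝ) * z ^ 2)) :=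
    integrable_mul_exp_neg_mul_sq (by norm_num)
  refine (h.const_mul (1 / Real.sqrt (2 * Real.pi))).congr ?_
  filter_upwards with z
  unfold stdNormalPDF
  rw [show -(1/2 : ℝ) * z ^ 2 = -z ^ 2 / 2 by ring]
  ring

lemma hasDerivAt_neg_stdNormalPDF (x : ℝ) :
    HasDerivAt (fun z : ℝ => -stdNormalPDF z) (x * stdNormalPDF x) x := by
  have h1 : HasDerivAt (fun z : ℝ => -z ^ 2 / 2) (-x) x := by
    have h := ((hasDerivAt_pow 2 x).neg).div_const 2
    refine h.congr_deriv ?_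
    push_cast; ring
  have h2 := (h1.exp.const_mul (1 / Real.sqrt (2 * Real.pi))).neg
  refine h2.congr_deriv ?_
  unfold stdNormalPDF
  ring

lemma tendsto_stdNormalPDF_atBot : Filter.Tendsto stdNormalPDF Filter.atBot (nhds 0) := by
  have hsq : Filter.Tendsto (fun z : ℝ => z ^ 2) Filter.atBot Filter.atTop := by
    have h := (Filter.tendsto_pow_atTop (n := 2) two_ne_zero).comp
      (Filter.tendsto_neg_atBot_atTop (G := ℝ))
    refine h.congr fun z => ?_
    simp [Function.comp, neg_sq]
  have harg : Filter.Tendsto (fun z : ℝ => -z ^ 2 / 2) Filter.atBot Filter.atBot := by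
    apply Filter.Tendsto.atBot_div_const (by norm_num : (0:ℝ) < 2)
    exact Filter.tendsto_neg_atBot_iff.mpr hsq
  have h0 := (Real.tendsto_exp_atBot.comp harg).const_mul (1 / Real.sqrt (2 * Real.pi))
  simp only [mul_zero] at h0
  exact h0

lemma integral_Iic_mul_stdNormalPDF (c : ℝ) :
    ∫ z in Set.Iic c, z * stdNormalPDF z = -stdNormalPDF c := by
  have h := integral_Iic_of_hasDerivAt_of_tendsto'
    (f := fun z : ℝ => -stdNormalPDF z) (f' := fun z => z * stdNormalPDF z) (a := c) (m := 0)
    (fun x _ => hasDerivAt_neg_stdNormalPDF x)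
    integrable_mul_stdNormalPDF.integrableOn
    (by simpa using tendsto_stdNormalPDF_atBot.neg)
  simpa using h

lemma gaussianPDFReal_eq_stdNormalPDF (m s : ℝ) (hs : 0 < s) (x : ℝ) :
    gaussianPDFReal m (Real.toNNReal (s ^ 2)) x = s⁻¹ * stdNormalPDF ((x - m) / s) := by
  unfold gaussianPDFReal stdNormalPDF
  have hs2 : ((Real.toNNReal (s ^ 2)) : ℝ) = s ^ 2 := Real.coe_toNNReal _ (sq_nonneg s)
  rw [hs2]
  have hsqrt : Real.sqrt (2 * π * s ^ 2) = Real.sqrt (2 * π) * s := by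
    rw [Real.sqrt_mul (by positivity), Real.sqrt_sq hs.le]
  rw [hsqrt]
  have hexp : -(x - m) ^ 2 / (2 * s ^ 2) = -((x - m) / s) ^ 2 / 2 := by
    rw [div_pow, neg_div, neg_div, div_div, mul_comm]
  rw [hexp]
  have hne : Real.sqrt (2 * π) ≠ 0 := by positivity
  field_simp

/-- **Closed form of the Expected Improvement.**
If `Y` is a real random variable whose law is Gaussian with mean `m` and
standard deviation `s > 0`, and `T` is the current best observed value, then
`E[max (0, T - Y)] = (T - m) * Φ((T - m)/s) + s * φ((T - m)/s)`. -/
theorem expected_improvement_closed_form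
    {Ω : Type*} [MeasurableSpace Ω] (P : Measure Ω) [IsProbabilityMeasure P]
    (Y : Ω → ℝ) (hY : Measurable Y) (m s T : ℝ) (hs : 0 < s)
    (hlaw : Measure.map Y P = gaussianReal m (Real.toNNReal (s ^ 2))) :
    ∫ ω, max 0 (T - Y ω) ∂P =
      (T - m) * stdNormalCDF ((T - m) / s) + s * stdNormalPDF ((T - m) / s) := by
  set v : ℝ≥0 := Real.toNNReal (s ^ 2) with hv
  have hv0 : v ≠ 0 := by
    simp only [hv, ne_eq, Real.toNNReal_eq_zero, not_le]
    positivity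
  have hcont : Continuous (fun x : ℝ => max 0 (T - x)) :=
    continuous_const.max (continuous_const.sub continuous_id)
  -- transfer to the law of Y
  have step1 : ∫ ω, max 0 (T - Y ω) ∂P = ∫ x, max 0 (T - x) ∂(gaussianReal m v) := by
    rw [← hlaw, integral_map hY.aemeasurable hcont.aestronglyMeasurable]
  rw [step1, gaussianReal_of_var_ne_zero m hv0]
  -- integral against the density
  have hdens : volume.withDensity (gaussianPDF m v) =
      volume.withDensity (fun x => ((Real.toNNReal (gaussianPDFReal m v x) : ℝ≥0) : ℝ≥0∞)) := rfl
  rw [hdens, integral_withDensity_eq_integral_smul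
    ((measurable_gaussianPDFReal m v).real_toNNReal) _]
  have step2 : ∀ x : ℝ, (Real.toNNReal (gaussianPDFReal m v x) : ℝ≥0) • max 0 (T - x)
      = s⁻¹ * (stdNormalPDF ((x - m) / s) * max 0 (T - x)) := by
    intro x
    rw [NNReal.smul_def, Real.coe_toNNReal _ (gaussianPDFReal_nonneg _ _ _),
      smul_eq_mul, gaussianPDFReal_eq_stdNormalPDF m s hs x]
    ring
  simp_rw [step2]
  rw [integral_const_mul]
  -- change of variables
  set H : ℝ → ℝ := fun z => stdNormalPDF z * max 0 (T - m - s * z) with hH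
  have hHmeas : ∀ x : ℝ, stdNormalPDF ((x - m) / s) * max 0 (T - x) = H ((x - m) / s) := by
    intro x
    simp only [hH]
    congr 2
    field_simp
    ring
  simp_rw [hHmeas]
  have hsub : (∫ x : ℝ, H ((x - m) / s)) = ∫ x : ℝ, H (x / s) := by
    exact integral_sub_right_eq_self (fun x => H (x / s)) m
  have hdiv : (∫ x : ℝ, H (x / s)) = |s| • ∫ z : ℝ, H z :=
    MeasureTheory.Measure.integral_comp_div H s
  rw [hsub, hdiv, abs_of_pos hs, smul_eq_mul, ← mul_assoc, inv_mul_cancel₀ hs.ne', one_mul]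
  -- truncate the integral
  set c : ℝ := (T - m) / s with hc
  have hind : ∀ z : ℝ, H z = Set.indicator (Set.Iic c)
      (fun z => stdNormalPDF z * (T - m - s * z)) z := by
    intro z
    by_cases hz : z ≤ c
    · have hpos : 0 ≤ T - m - s * z := by
        have : s * z ≤ s * c := by nlinarith
        have hsc : s * c = T - m := by rw [hc]; field_simp [hs.ne']
        linarith [this.trans_eq hsc]
      rw [Set.indicator_of_mem (Set.mem_Iic.mpr hz)]
      simp only [hH, max_eq_right hpos]
    · have hneg : T - m - s * z < 0 := by
        push_neg at hz
        have : s * c < s * z := by nlinarith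
        have hsc : s * c = T - m := by rw [hc]; field_simp [hs.ne']
        linarith [hsc ▸ this]
      rw [Set.indicator_of_notMem (by simpa using hz)]
      simp only [hH, max_eq_left hneg.le, mul_zero]
  simp_rw [hind]
  rw [integral_indicator measurableSet_Iic]
  -- split and evaluate
  have hsplit : ∀ z : ℝ, stdNormalPDF z * (T - m - s * z)
      = (T - m) * stdNormalPDF z - s * (z * stdNormalPDF z) := fun z => by ring
  simp_rw [hsplit]
  rw [integral_sub ((integrable_stdNormalPDF.integrableOn).const_mul (T - m))
    ((integrable_mul_stdNormalPDF.integrableOn).const_mul s),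
    integral_const_mul, integral_const_mul, integral_Iic_mul_stdNormalPDF c]
  simp only [stdNormalCDF]
  ring
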